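/- Theorem 4.6 (linear lower bound): Let 𝒳 be a Polish space and ℋ a concept class whose members are universally measurable. If ℋ has an infinite Littlestone tree, then for any learning algorithm ĥ_n there exists a realizable distribution P on 𝒳 × {0,1} such that E[er_P(ĥ_n)] ≥ 1/(32·n) for infinitely many n. In particular, ℋ is not learnable at rate faster than 1/n. -/

import Mathlib

open scoped ENNReal

/-- A function is universally measurable if it is measurable with respect to (the completion of)
every Borel probability measure on its domain. -/
def UniversallyMeasurable {α β : Type*} [MeasurableSpace α] [MeasurableSpace β] (f : α → β) : Prop :=
  ∀ μ : MeasureTheory.Measure α, MeasureTheory.IsProbabilityMeasure μ →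
    MeasureTheory.NullMeasurable f μ

variable {𝒳 : Type*}

/-- The error of a classifier `h` under distribution `P` on `𝒳 × {0,1}`. -/
noncomputable def errP [MeasurableSpace 𝒳] (P : MeasureTheory.Measure (𝒳 × Bool))
    (h : 𝒳 → Bool) : ℝ≥0∞ :=
  P {p : 𝒳 × Bool | h p.1 ≠ p.2}

/-- `P` is realizable w.r.t. the concept class `ℋ`: `inf_{h ∈ ℋ} er_P(h) = 0`. -/
def Realizable [MeasurableSpace 𝒳] (ℋ : Set (𝒳 → Bool))
    (P : MeasureTheory.Measure (𝒳 × Bool)) : Prop :=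
  (⨅ h ∈ ℋ, errP P h) = 0

/-- A learning algorithm: a sequence of universally measurable maps
`H_n : (𝒳 × {0,1})^n × 𝒳 → {0,1}`. -/
structure LearningAlgorithm (𝒳 : Type*) [MeasurableSpace 𝒳] where
  H : ∀ n : ℕ, (Fin n → 𝒳 × Bool) → 𝒳 → Bool
  meas : ∀ n : ℕ, UniversallyMeasurable fun q : (Fin n → 𝒳 × Bool) × 𝒳 => H n q.1 q.2

/-- Expected error `E[er_P(ĥ_n)]` of the output of a learning algorithm on an i.i.d. sample of
size `n` from `P`, i.e. integration with respect to `P^{⊗n}`. -/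
noncomputable def expErr [MeasurableSpace 𝒳] (P : MeasureTheory.Measure (𝒳 × Bool))
    (A : LearningAlgorithm 𝒳) (n : ℕ) : ℝ≥0∞ :=
  MeasureTheory.lintegral (MeasureTheory.Measure.pi fun _ : Fin n => P)
    fun s => errP P (A.H n s)

/-- A rate function: `R : ℕ → [0,1]` with `R(n) → 0`. -/
def IsRate (R : ℕ → ℝ) : Prop :=
  (∀ n, R n ∈ Set.Icc (0 : ℝ) 1) ∧ Filter.Tendsto R Filter.atTop (nhds 0)

/-- `ℋ` is learnable at rate `R`. -/
def LearnableAtRate [MeasurableSpace 𝒳] (ℋ : Set (𝒳 → Bool)) (R : ℕ → ℝ) : Prop :=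
  ∃ A : LearningAlgorithm 𝒳,
    ∀ P : MeasureTheory.Measure (𝒳 × Bool),
      MeasureTheory.IsProbabilityMeasure P → Realizable ℋ P →
        ∃ C > (0 : ℝ), ∃ c > (0 : ℝ), ∀ n : ℕ,
          expErr P A n ≤ ENNReal.ofReal (C * R ⌈c * (n : ℝ)⌉₊)

/-- `ℋ` is not learnable at rate faster than `R`. -/
def NotLearnableFasterThan [MeasurableSpace 𝒳] (ℋ : Set (𝒳 → Bool)) (R : ℕ → ℝ) : Prop :=
  ∀ A : LearningAlgorithm 𝒳,
    ∃ P : MeasureTheory.Measure (𝒳 × Bool),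
      MeasureTheory.IsProbabilityMeasure P ∧ Realizable ℋ P ∧
        ∃ C > (0 : ℝ), ∃ c > (0 : ℝ),
          {n : ℕ | ENNReal.ofReal (C * R ⌈c * (n : ℝ)⌉₊) ≤ expErr P A n}.Infinite

/-- `ℋ` is learnable with optimal rate `R`. -/
def LearnableWithOptimalRate [MeasurableSpace 𝒳] (ℋ : Set (𝒳 → Bool)) (R : ℕ → ℝ) : Prop :=
  LearnableAtRate ℋ R ∧ NotLearnableFasterThan ℋ R

/-- `ℋ` requires arbitrarily slow rates. -/
def RequiresArbitrarilySlowRates [MeasurableSpace 𝒳] (ℋ : Set (𝒳 → Bool)) : Prop :=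
  ∀ R : ℕ → ℝ, IsRate R → NotLearnableFasterThan ℋ R

/-- Witness that `ℋ` is a measurable class: it is parameterized by a Polish space `Θ` via a
Borel measurable map `𝗁 : Θ × 𝒳 → {0,1}`. -/
structure MeasurableClassWitness (𝒳 : Type*) [MeasurableSpace 𝒳] (ℋ : Set (𝒳 → Bool)) where
  Θ : Type
  [tΘ : TopologicalSpace Θ]
  [mΘ : MeasurableSpace Θ]
  [polish : PolishSpace Θ]
  [borel : BorelSpace Θ]
  f : Θ → 𝒳 → Bool
  meas : Measurable (Function.uncurry f)
  range_eq : ℋ = Set.range f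

/-- `ℋ` is a measurable class (image admissible Suslin). -/
def MeasurableClass (𝒳 : Type*) [MeasurableSpace 𝒳] (ℋ : Set (𝒳 → Bool)) : Prop :=
  Nonempty (MeasurableClassWitness 𝒳 ℋ)

/-- `ℋ` has an infinite Littlestone tree: nodes are indexed by finite binary strings, and every
finite branch is consistent with some concept in `ℋ`. -/
def HasInfiniteLittlestoneTree (ℋ : Set (𝒳 → Bool)) : Prop :=
  ∃ x : List Bool → 𝒳, ∀ (y : ℕ → Bool) (n : ℕ),
    ∃ h ∈ ℋ, ∀ k ≤ n, h (x (List.ofFn fun i : Fin k => y i)) = y k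

/-- `ℋ` has an infinite VCL tree: the node at depth `k` along a branch is a `(k+1)`-tuple of
points, edges out of it are labelled by `{0,1}^{k+1}`, and every finite branch is consistent
with some concept in `ℋ`. -/
def HasInfiniteVCLTree (ℋ : Set (𝒳 → Bool)) : Prop :=
  ∃ x : ∀ k : ℕ, (∀ j : Fin k, Fin (j.val + 1) → Bool) → Fin (k + 1) → 𝒳,
    ∀ (y : ∀ k : ℕ, Fin (k + 1) → Bool) (n : ℕ),
      ∃ h ∈ ℋ, ∀ k ≤ n, ∀ i : Fin (k + 1),
        h (x k (fun j => y j.val) i) = y k i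

set_option linter.unusedSectionVars false
set_option linter.unusedVariables false

namespace LLB
open MeasureTheory

noncomputable section

variable {𝒳 : Type*} [MeasurableSpace 𝒳] [MeasurableSingletonClass 𝒳]

/-- weight of level `k` -/
def w (k : ℕ) : ℝ≥0∞ := 2⁻¹ ^ (k + 1)

lemma tsum_w : (∑' k : ℕ, w k) = 1 := by
  have : (∑' k : ℕ, w k) = (∑' k : ℕ, 2⁻¹ ^ k) * 2⁻¹ := by
    rw [← ENNReal.tsum_mul_right]
    exact tsum_congr fun k => (pow_succ _ _)
  rw [this, ENNReal.tsum_geometric, ENNReal.one_sub_inv_two, inv_inv]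
  exact ENNReal.mul_inv_cancel (by norm_num) (by norm_num)

lemma sum_w_add (m : ℕ) : (∑ j : Fin m, w j) + 2⁻¹ ^ m = 1 := by
  induction m with
  | zero => simp
  | succ m ih =>
    rw [Fin.sum_univ_castSucc]
    have h2 : w m + 2⁻¹ ^ (m + 1) = 2⁻¹ ^ m := by
      rw [w]
      rw [← two_mul, pow_succ, ← mul_assoc]
      rw [mul_comm (2 : ℝ≥0∞) (2⁻¹ ^ m), mul_assoc,
        ENNReal.mul_inv_cancel (by norm_num) (by norm_num), mul_one]
    simp only [Fin.coe_castSucc, Fin.val_last]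
    rw [add_assoc, h2, ih]

variable (x : List Bool → 𝒳)

/-- the point of the tree at depth `k` along branch `y` -/
def zpt (y : ℕ → Bool) (k : ℕ) : 𝒳 := x (List.ofFn fun i : Fin k => y i)

/-- the atom of the adversarial measure at level `k` -/
def atomF (y : ℕ → Bool) (k : ℕ) : 𝒳 × Bool := (zpt x y k, y k)

lemma zpt_congr {y y' : ℕ → Bool} {k : ℕ} (h : ∀ i < k, y i = y' i) :
    zpt x y k = zpt x y' k := by
  unfold zpt
  congr 1
  exact congrArg _ (funext fun i => h i i.2)

lemma atomF_congr {y y' : ℕ → Bool} {k : ℕ} (h : ∀ i ≤ k, y i = y' i) :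
    atomF x y k = atomF x y' k := by
  unfold atomF
  rw [zpt_congr x (fun i hi => h i hi.le), h k le_rfl]

/-- the adversarial measure along branch `y` -/
def Pm (y : ℕ → Bool) : Measure (𝒳 × Bool) :=
  Measure.sum fun k => w k • Measure.dirac (atomF x y k)

lemma Pm_apply (y : ℕ → Bool) (s : Set (𝒳 × Bool)) :
    Pm x y s = ∑' k : ℕ, w k * s.indicator 1 (atomF x y k) := by
  rw [Pm, Measure.sum_apply_of_countable]
  exact tsum_congr fun k => by
    rw [Measure.smul_apply, smul_eq_mul, Measure.dirac_apply]

lemma Pm_prob (y : ℕ → Bool) : IsProbabilityMeasure (Pm x y) := by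
  constructor
  rw [Pm_apply]
  simp only [Set.indicator_univ, Pi.one_apply, mul_one]
  exact tsum_w

lemma errP_Pm (y : ℕ → Bool) (h : 𝒳 → Bool) :
    errP (Pm x y) h = ∑' k : ℕ, w k * {p : 𝒳 × Bool | h p.1 ≠ p.2}.indicator 1 (atomF x y k) :=
  Pm_apply x y _

lemma errP_ge (y : ℕ → Bool) (h : 𝒳 → Bool) (k : ℕ) (hk : h (zpt x y k) ≠ y k) :
    w k ≤ errP (Pm x y) h := by
  rw [errP_Pm]
  refine le_trans ?_ (ENNReal.le_tsum k)
  rw [Set.indicator_of_mem (by exact hk) (1 : 𝒳 × Bool → ℝ≥0∞), Pi.one_apply, mul_one]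

lemma errP_le (y : ℕ → Bool) (h : 𝒳 → Bool) (n : ℕ) (hh : ∀ k ≤ n, h (zpt x y k) = y k) :
    errP (Pm x y) h ≤ 2⁻¹ ^ (n + 1) := by
  rw [errP_Pm]
  have hle : ∀ k : ℕ, w k * {p : 𝒳 × Bool | h p.1 ≠ p.2}.indicator 1 (atomF x y k) ≤
      (fun k => if k ≤ n then 0 else w k) k := by
    intro k
    by_cases hk : k ≤ n
    · rw [Set.indicator_of_notMem (by simpa [atomF] using hh k hk) (1 : 𝒳 × Bool → ℝ≥0∞)]
      simp [hk]
    · simp only [hk, if_false]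
      calc w k * _ ≤ w k * 1 := by
            exact mul_le_mul_right (Set.indicator_le_self' (by simp) _) _
        _ = w k := mul_one _
  refine le_trans (ENNReal.tsum_le_tsum hle) ?_
  have := Summable.sum_add_tsum_nat_add' (f := fun k => if k ≤ n then 0 else w k) (k := n + 1)
    ENNReal.summable
  rw [← this]
  have h1 : (∑ i ∈ Finset.range (n + 1), if i ≤ n then (0 : ℝ≥0∞) else w i) = 0 := by
    refine Finset.sum_eq_zero fun i hi => ?_
    simp [Nat.lt_succ_iff.mp (Finset.mem_range.mp hi)]
  rw [h1, zero_add]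
  have h2 : (∑' i : ℕ, if i + (n + 1) ≤ n then (0 : ℝ≥0∞) else w (i + (n + 1))) =
      ∑' i : ℕ, w (i + (n + 1)) := by
    refine tsum_congr fun i => ?_
    simp [Nat.not_le.mpr (by omega : n < i + (n + 1))]
  rw [h2]
  have h3 : (∑' i : ℕ, w (i + (n + 1))) = 2⁻¹ ^ (n + 1) * ∑' i : ℕ, w i := by
    rw [← ENNReal.tsum_mul_left]
    refine tsum_congr fun i => ?_
    rw [w, w, ← pow_add]
    ring_nf
  rw [h3, tsum_w, mul_one]

end

end LLB
section P2
open MeasureTheory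
open scoped ENNReal
namespace LLB

lemma tsum_unique {β : Type*} [Unique β] (f : β → ℝ≥0∞) : ∑' b : β, f b = f default :=
  tsum_eq_single default fun b hb => absurd (Subsingleton.elim b default) hb

lemma tsum_prod_pi {β : Type*} : ∀ {n : ℕ} (f : Fin n → β → ℝ≥0∞),
    ∑' u : Fin n → β, ∏ i, f i (u i) = ∏ i, ∑' j : β, f i j := by
  intro n
  induction n with
  | zero =>
    intro f
    rw [tsum_unique]
    simp
  | succ n ih =>
    intro f
    rw [← (Fin.consEquiv (fun _ : Fin (n + 1) => β)).tsum_eq, ENNReal.tsum_prod']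
    have hterm : ∀ (a : β) (u : Fin n → β),
        (∏ i, f i ((Fin.consEquiv (fun _ : Fin (n + 1) => β)) (a, u) i)) =
          f 0 a * ∏ i : Fin n, f i.succ (u i) := by
      intro a u
      rw [Fin.prod_univ_succ]
      simp [Fin.consEquiv]
    calc (∑' (a : β) (u : Fin n → β),
          ∏ i, f i ((Fin.consEquiv (fun _ : Fin (n + 1) => β)) (a, u) i))
        = ∑' (a : β), f 0 a * ∑' u : Fin n → β, ∏ i : Fin n, f i.succ (u i) := by
          refine tsum_congr fun a => ?_
          rw [← ENNReal.tsum_mul_left]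
          exact tsum_congr fun u => hterm a u
      _ = (∑' a : β, f 0 a) * ∏ i : Fin n, ∑' j : β, f i.succ j := by
          rw [ENNReal.tsum_mul_right, ih]
      _ = ∏ i, ∑' j : β, f i j := by
          rw [Fin.prod_univ_succ]

end LLB
end P2
section P3
open MeasureTheory
open scoped ENNReal
namespace LLB
noncomputable section
variable {𝒳 : Type*} [MeasurableSpace 𝒳] [MeasurableSingletonClass 𝒳]
variable (x : List Bool → 𝒳)

lemma Pm_pi (y : ℕ → Bool) (n : ℕ) :
    Measure.pi (fun _ : Fin n => Pm x y) =
      Measure.sum (fun u : Fin n → ℕ =>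
        (∏ i, w (u i)) • Measure.dirac (fun i => atomF x y (u i))) := by
  haveI : IsProbabilityMeasure (Pm x y) := Pm_prob x y
  refine Measure.pi_eq fun s hs => ?_
  rw [Measure.sum_apply_of_countable]
  have hterm : ∀ u : Fin n → ℕ,
      ((∏ i, w (u i)) • Measure.dirac (fun i => atomF x y (u i))) (Set.univ.pi s) =
        ∏ i, (w (u i) * (s i).indicator 1 (atomF x y (u i))) := by
    intro u
    rw [Measure.smul_apply, smul_eq_mul, Measure.dirac_apply]
    have hind : (Set.univ.pi s).indicator (1 : (Fin n → 𝒳 × Bool) → ℝ≥0∞)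
        (fun i => atomF x y (u i)) = ∏ i, (s i).indicator 1 (atomF x y (u i)) := by
      by_cases h : ∀ i, atomF x y (u i) ∈ s i
      · rw [Set.indicator_of_mem (Set.mem_univ_pi.mpr h)]
        rw [Finset.prod_congr rfl fun i _ => Set.indicator_of_mem (h i) (1 : 𝒳 × Bool → ℝ≥0∞)]
        simp
      · push_neg at h
        obtain ⟨i, hi⟩ := h
        rw [Set.indicator_of_notMem (fun hmem => hi (Set.mem_univ_pi.mp hmem i))]
        rw [Finset.prod_eq_zero (Finset.mem_univ i)
          (Set.indicator_of_notMem hi (1 : 𝒳 × Bool → ℝ≥0∞))]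
    rw [hind, ← Finset.prod_mul_distrib]
  rw [tsum_congr hterm, tsum_prod_pi (fun i j => w j * (s i).indicator 1 (atomF x y j))]
  exact Finset.prod_congr rfl fun i _ => (Pm_apply x y (s i)).symm

lemma expErr_Pm (A : LearningAlgorithm 𝒳) (y : ℕ → Bool) (n : ℕ) :
    expErr (Pm x y) A n =
      ∑' u : Fin n → ℕ, (∏ i, w (u i)) *
        errP (Pm x y) (A.H n (fun i => atomF x y (u i))) := by
  rw [expErr, Pm_pi, lintegral_sum_measure]
  exact tsum_congr fun u => by rw [lintegral_smul_measure, lintegral_dirac, smul_eq_mul]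

end
end LLB
end P3
section P4
open MeasureTheory
open scoped ENNReal
namespace LLB
noncomputable section
variable {𝒳 : Type*} [MeasurableSpace 𝒳] [MeasurableSingletonClass 𝒳]
variable (A : LearningAlgorithm 𝒳) (x : List Bool → 𝒳)

def badMass (y : ℕ → Bool) (k : ℕ) (b : Bool) : ℝ≥0∞ :=
  ∑ v : Fin (2 ^ k) → Fin (k + 1), (∏ i, w (v i)) *
    (if A.H (2 ^ k) (fun i => atomF x y (v i)) (zpt x y (k + 1)) = b then 1 else 0)

lemma badMass_congr {y y' : ℕ → Bool} {k : ℕ} (h : ∀ i ≤ k, y i = y' i) (b : Bool) :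
    badMass A x y k b = badMass A x y' k b := by
  unfold badMass
  have hz : zpt x y (k + 1) = zpt x y' (k + 1) :=
    zpt_congr x (fun i hi => h i (Nat.lt_succ_iff.mp hi))
  refine Finset.sum_congr rfl fun v _ => ?_
  have ha : (fun i => atomF x y (v i)) = fun i => atomF x y' (v i) := by
    funext i
    exact atomF_congr x (fun j hj => h j (le_trans hj (Nat.lt_succ_iff.mp (v i).2)))
  rw [ha, hz]

def step (y : ℕ → Bool) (k : ℕ) : Bool :=
  if badMass A x y k true ≤ badMass A x y k false then true else false

lemma step_congr {y y' : ℕ → Bool} {k : ℕ} (h : ∀ i ≤ k, y i = y' i) :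
    step A x y k = step A x y' k := by
  unfold step
  rw [badMass_congr A x h true, badMass_congr A x h false]

def gseq : ℕ → ℕ → Bool
  | 0 => fun _ => false
  | (k + 1) => fun i => if i = k + 1 then step A x (gseq k) k else gseq k i

def Y (i : ℕ) : Bool := gseq A x i i

lemma gseq_stable {m i : ℕ} (h : i ≤ m) : ∀ d, gseq A x (m + d) i = gseq A x m i := by
  intro d
  induction d with
  | zero => rfl
  | succ d ih =>
    have h1 : gseq A x (m + d + 1) i = gseq A x (m + d) i := by
      show (if i = m + d + 1 then _ else gseq A x (m + d) i) = _
      rw [if_neg (by omega)]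
    exact h1.trans ih

lemma gseq_eq_Y {m i : ℕ} (h : i ≤ m) : gseq A x m i = Y A x i := by
  obtain ⟨d, rfl⟩ := Nat.exists_eq_add_of_le h
  exact gseq_stable A x le_rfl d

lemma Y_succ (k : ℕ) : Y A x (k + 1) = step A x (Y A x) k := by
  have h1 : Y A x (k + 1) = step A x (gseq A x k) k := by
    show (if k + 1 = k + 1 then _ else _) = _
    rw [if_pos rfl]
  rw [h1]
  exact step_congr A x (fun i hi => gseq_eq_Y A x hi)

lemma bern (a b : ℝ≥0∞) (hab : a + b = 1) : ∀ n : ℕ, 1 ≤ a ^ n + n * b := by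
  have ha1 : a ≤ 1 := le_trans le_self_add hab.le
  intro n
  induction n with
  | zero => simp
  | succ n ih =>
    have key : a ^ n ≤ a ^ (n + 1) + b :=
      calc a ^ n = a ^ n * (a + b) := by rw [hab, mul_one]
        _ = a ^ (n + 1) + a ^ n * b := by rw [mul_add, pow_succ]
        _ ≤ a ^ (n + 1) + b := by
            refine add_le_add_right ?_ _
            calc a ^ n * b ≤ 1 * b := mul_le_mul_left (pow_le_one' ha1 n) b
              _ = b := one_mul b
    calc (1 : ℝ≥0∞) ≤ a ^ n + n * b := ih
      _ ≤ (a ^ (n + 1) + b) + n * b := add_le_add_left key _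
      _ = a ^ (n + 1) + (n + 1 : ℕ) * b := by rw [Nat.cast_succ]; ring

lemma sum_pow (m n : ℕ) (f : Fin m → ℝ≥0∞) :
    ∑ v : Fin n → Fin m, ∏ i, f (v i) = (∑ j, f j) ^ n := by
  have h1 : ∑ v : Fin n → Fin m, ∏ i, f (v i) = ∑' v : Fin n → Fin m, ∏ i, f (v i) :=
    (tsum_fintype _).symm
  rw [h1, tsum_prod_pi (fun _ j => f j)]
  simp [tsum_fintype]

lemma badMass_add (y : ℕ → Bool) (k : ℕ) :
    badMass A x y k true + badMass A x y k false = (∑ j : Fin (k + 1), w j) ^ (2 ^ k) := by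
  unfold badMass
  rw [← Finset.sum_add_distrib, ← sum_pow (k + 1) (2 ^ k) (fun j => w j)]
  refine Finset.sum_congr rfl fun v _ => ?_
  rw [← mul_add]
  cases hpred : A.H (2 ^ k) (fun i => atomF x y (v i)) (zpt x y (k + 1)) <;> simp

lemma badMass_step (y : ℕ → Bool) (k : ℕ) :
    (∑ j : Fin (k + 1), w j) ^ (2 ^ k) ≤ 2 * badMass A x y k (!(step A x y k)) := by
  rw [step]
  by_cases hle : badMass A x y k true ≤ badMass A x y k false
  · rw [if_pos hle]
    rw [Bool.not_true, ← badMass_add A x y k, two_mul]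
    exact add_le_add_left hle _
  · rw [if_neg hle]
    rw [Bool.not_false, ← badMass_add A x y k, two_mul]
    exact add_le_add_right (le_of_not_ge hle) _

end
end LLB
end P4
section P5
open MeasureTheory
open scoped ENNReal
namespace LLB
noncomputable section
variable {𝒳 : Type*} [MeasurableSpace 𝒳] [MeasurableSingletonClass 𝒳]
variable (A : LearningAlgorithm 𝒳) (x : List Bool → 𝒳)

lemma core (k : ℕ) :
    2⁻¹ ^ (k + 4) ≤ expErr (Pm x (Y A x)) A (2 ^ k) := by
  have hS : (2⁻¹ : ℝ≥0∞) ≤ (∑ j : Fin (k + 1), w j) ^ (2 ^ k) := by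
    have hb := bern (∑ j : Fin (k + 1), w j) (2⁻¹ ^ (k + 1)) (sum_w_add (k + 1)) (2 ^ k)
    have hn : ((2 ^ k : ℕ) : ℝ≥0∞) * 2⁻¹ ^ (k + 1) = 2⁻¹ := by
      have hc : ((2 ^ k : ℕ) : ℝ≥0∞) = 2 ^ k := by push_cast; ring
      rw [hc, pow_succ, ← mul_assoc, ← mul_pow,
        ENNReal.mul_inv_cancel (by norm_num) (by norm_num), one_pow, one_mul]
    rw [hn] at hb
    have h2 := tsub_le_iff_right.mpr hb
    rwa [ENNReal.one_sub_inv_two] at h2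
  have hB : (2⁻¹ : ℝ≥0∞) * 2⁻¹ ≤ badMass A x (Y A x) k (!(Y A x (k + 1))) := by
    rw [Y_succ A x k]
    calc (2⁻¹ : ℝ≥0∞) * 2⁻¹ ≤ 2⁻¹ * ((∑ j : Fin (k + 1), w j) ^ (2 ^ k)) :=
          mul_le_mul_right hS _
      _ ≤ 2⁻¹ * (2 * badMass A x (Y A x) k (!(step A x (Y A x) k))) :=
          mul_le_mul_right (badMass_step A x (Y A x) k) _
      _ = badMass A x (Y A x) k (!(step A x (Y A x) k)) := by
          rw [← mul_assoc, ENNReal.inv_mul_cancel (by norm_num) (by norm_num), one_mul]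
  rw [expErr_Pm]
  have hinj : Function.Injective (fun (v : Fin (2 ^ k) → Fin (k + 1)) (i : Fin (2 ^ k)) =>
      ((v i : ℕ))) := by
    intro v v' hvv
    funext i
    exact Fin.val_injective (congrFun hvv i)
  have hsum : ∑ v : Fin (2 ^ k) → Fin (k + 1), (∏ i, w (v i)) *
      errP (Pm x (Y A x)) (A.H (2 ^ k) (fun i => atomF x (Y A x) (v i))) ≤
      ∑' u : Fin (2 ^ k) → ℕ, (∏ i, w (u i)) *
        errP (Pm x (Y A x)) (A.H (2 ^ k) (fun i => atomF x (Y A x) (u i))) := by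
    have himg := Finset.sum_image (f := fun u : Fin (2 ^ k) → ℕ => (∏ i, w (u i)) *
        errP (Pm x (Y A x)) (A.H (2 ^ k) (fun i => atomF x (Y A x) (u i))))
        (s := (Finset.univ : Finset (Fin (2 ^ k) → Fin (k + 1))))
        (g := fun (v : Fin (2 ^ k) → Fin (k + 1)) (i : Fin (2 ^ k)) => ((v i : ℕ)))
        (fun a _ b _ h => hinj h)
    exact le_trans (le_of_eq himg.symm) (ENNReal.sum_le_tsum _)
  refine le_trans ?_ hsum
  have hterm : ∀ v : Fin (2 ^ k) → Fin (k + 1),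
      (∏ i, w (v i)) * ((if A.H (2 ^ k) (fun i => atomF x (Y A x) (v i))
          (zpt x (Y A x) (k + 1)) = !(Y A x (k + 1)) then (1 : ℝ≥0∞) else 0) * w (k + 1)) ≤
      (∏ i, w (v i)) * errP (Pm x (Y A x)) (A.H (2 ^ k) (fun i => atomF x (Y A x) (v i))) := by
    intro v
    refine mul_le_mul_right ?_ _
    by_cases hpred : A.H (2 ^ k) (fun i => atomF x (Y A x) (v i))
        (zpt x (Y A x) (k + 1)) = !(Y A x (k + 1))
    · rw [if_pos hpred, one_mul]
      refine errP_ge x (Y A x) _ (k + 1) ?_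
      rw [hpred]
      exact Bool.not_ne_self _
    · rw [if_neg hpred, zero_mul]
      exact zero_le
  refine le_trans ?_ (Finset.sum_le_sum fun v _ => hterm v)
  have hb2 : ∑ v : Fin (2 ^ k) → Fin (k + 1),
      (∏ i, w (v i)) * ((if A.H (2 ^ k) (fun i => atomF x (Y A x) (v i))
        (zpt x (Y A x) (k + 1)) = !(Y A x (k + 1)) then (1 : ℝ≥0∞) else 0) * w (k + 1)) =
      w (k + 1) * badMass A x (Y A x) k (!(Y A x (k + 1))) := by
    rw [badMass, Finset.mul_sum]
    exact Finset.sum_congr rfl fun v _ => by ring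
  rw [hb2]
  calc (2⁻¹ : ℝ≥0∞) ^ (k + 4) = 2⁻¹ ^ (k + 2) * (2⁻¹ * 2⁻¹) := by ring
    _ ≤ w (k + 1) * badMass A x (Y A x) k (!(Y A x (k + 1))) := by
        refine mul_le_mul' (le_of_eq ?_) hB
        rw [w]

end
end LLB
end P5
section P6
open MeasureTheory
open scoped ENNReal
namespace LLB
noncomputable section
variable {𝒳 : Type*} [MeasurableSpace 𝒳] [MeasurableSingletonClass 𝒳]
variable (x : List Bool → 𝒳)

lemma Pm_realizable (ℋ : Set (𝒳 → Bool))
    (hx : ∀ (y : ℕ → Bool) (n : ℕ), ∃ h ∈ ℋ, ∀ k ≤ n,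
      h (x (List.ofFn fun i : Fin k => y i)) = y k) (y : ℕ → Bool) :
    Realizable ℋ (Pm x y) := by
  rw [Realizable]
  have hub : ∀ n : ℕ, (⨅ h ∈ ℋ, errP (Pm x y) h) ≤ 2⁻¹ ^ (n + 1) := by
    intro n
    obtain ⟨h, hmem, hcons⟩ := hx y n
    exact le_trans (iInf₂_le h hmem) (errP_le x y h n hcons)
  by_contra hne
  obtain ⟨n, hn⟩ := ENNReal.exists_inv_two_pow_lt hne
  have h2 : (⨅ h ∈ ℋ, errP (Pm x y) h) ≤ 2⁻¹ ^ n := by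
    refine le_trans (hub n) ?_
    calc (2⁻¹ : ℝ≥0∞) ^ (n + 1) = 2⁻¹ ^ n * 2⁻¹ := pow_succ _ _
      _ ≤ 2⁻¹ ^ n * 1 := mul_le_mul_right (by norm_num) _
      _ = 2⁻¹ ^ n := mul_one _
  exact absurd (lt_of_lt_of_le hn h2) (lt_irrefl _)

lemma ofReal_bound (k : ℕ) :
    ENNReal.ofReal (1 / (32 * ((2 ^ k : ℕ) : ℝ))) ≤ (2⁻¹ : ℝ≥0∞) ^ (k + 4) := by
  have h1 : (1 : ℝ) / (32 * ((2 ^ k : ℕ) : ℝ)) ≤ (1 / 2 : ℝ) ^ (k + 4) := by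
    rw [div_pow, one_pow]
    refine one_div_le_one_div_of_le (by positivity) ?_
    push_cast
    rw [pow_add]
    nlinarith [pow_pos (by norm_num : (0 : ℝ) < 2) k]
  have h2 : ENNReal.ofReal ((1 / 2 : ℝ) ^ (k + 4)) = (2⁻¹ : ℝ≥0∞) ^ (k + 4) := by
    rw [ENNReal.ofReal_pow (by norm_num)]
    congr 1
    rw [one_div, ENNReal.ofReal_inv_of_pos (by norm_num), ENNReal.ofReal_ofNat]
  exact le_trans (ENNReal.ofReal_le_ofReal h1) h2.le

end
end LLB
end P6


/-- **Theorem 4.6 (linear lower bound).** If `ℋ` (members universally measurable) has an infinite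
Littlestone tree, then for any learning algorithm there exists a realizable distribution `P` with
`E[er_P(ĥ_n)] ≥ 1/(32 n)` for infinitely many `n`. In particular, `ℋ` is not learnable at rate
faster than `1/n`. -/
theorem linear_lower_bound
    (𝒳 : Type*) [TopologicalSpace 𝒳] [PolishSpace 𝒳] [MeasurableSpace 𝒳] [BorelSpace 𝒳]
    (ℋ : Set (𝒳 → Bool)) (hum : ∀ h ∈ ℋ, UniversallyMeasurable h)
    (htree : HasInfiniteLittlestoneTree ℋ) :
    (∀ A : LearningAlgorithm 𝒳,
      ∃ P : MeasureTheory.Measure (𝒳 × Bool),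
        MeasureTheory.IsProbabilityMeasure P ∧ Realizable ℋ P ∧
          {n : ℕ | ENNReal.ofReal (1 / (32 * (n : ℝ))) ≤ expErr P A n}.Infinite) ∧
    NotLearnableFasterThan ℋ (fun n => 1 / max (n : ℝ) 1) := by
  obtain ⟨x, hx⟩ := htree
  have main : ∀ A : LearningAlgorithm 𝒳,
      ∃ P : MeasureTheory.Measure (𝒳 × Bool), MeasureTheory.IsProbabilityMeasure P ∧ Realizable ℋ P ∧
        (∀ k : ℕ, ENNReal.ofReal (1 / (32 * ((2 ^ k : ℕ) : ℝ))) ≤ expErr P A (2 ^ k)) := by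
    intro A
    exact ⟨LLB.Pm x (LLB.Y A x), LLB.Pm_prob x _, LLB.Pm_realizable x ℋ hx _,
      fun k => le_trans (LLB.ofReal_bound k) (LLB.core A x k)⟩
  have hpowinj : Function.Injective (fun k : ℕ => 2 ^ k) :=
    fun a b hab => Nat.pow_right_injective le_rfl hab
  constructor
  · intro A
    obtain ⟨P, h1, h2, h3⟩ := main A
    refine ⟨P, h1, h2, ?_⟩
    exact Set.infinite_of_injective_forall_mem hpowinj fun k => h3 k
  · intro A
    obtain ⟨P, h1, h2, h3⟩ := main A
    refine ⟨P, h1, h2, 1 / 32, by norm_num, 1, by norm_num, ?_⟩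
    refine Set.infinite_of_injective_forall_mem hpowinj fun k => ?_
    show ENNReal.ofReal ((1 : ℝ) / 32 *
      (1 / max ((⌈(1 : ℝ) * ((2 ^ k : ℕ) : ℝ)⌉₊ : ℕ) : ℝ) 1)) ≤ expErr P A (2 ^ k)
    have hceil : ⌈(1 : ℝ) * ((2 ^ k : ℕ) : ℝ)⌉₊ = 2 ^ k := by
      rw [one_mul, Nat.ceil_natCast]
    rw [hceil]
    have hmax : max (((2 ^ k : ℕ) : ℕ) : ℝ) 1 = ((2 ^ k : ℕ) : ℝ) :=
      max_eq_left (by exact_mod_cast Nat.one_le_two_pow)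
    rw [hmax]
    have harith : (1 : ℝ) / 32 * (1 / ((2 ^ k : ℕ) : ℝ)) = 1 / (32 * ((2 ^ k : ℕ) : ℝ)) := by
      rw [div_mul_div_comm, one_mul]
    rw [harith]
    exact h3 k
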